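/- Let D be a probability measure on a measurable space X, let κ₀ and κ₁ be Markov kernels from X to a measurable space Y, let c ∈ (0,1], and let S ⊆ X be a measurable set with D(S) ≤ ε such that κ₀(x) = κ₁(x) for every x ∉ S and TV(κ₀(x), κ₁(x)) ≤ c for every x ∈ S. Then the mixture distributions P₀ = D.bind κ₀ and P₁ = D.bind κ₁ satisfy TV(P₀, P₁) ≤ c·ε. -/

import Mathlib

open MeasureTheory ProbabilityTheory

/-- Total variation distance between two measures: the supremum over measurable
sets `A` of `|P A - Q A|`. -/
noncomputable def TV {Ω : Type*} [MeasurableSpace Ω] (P Q : Measure Ω) : ℝ :=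
  ⨆ A : {s : Set Ω // MeasurableSet s}, |(P A.1).toReal - (Q A.1).toReal|

lemma tv_ge {Ω : Type*} [MeasurableSpace Ω] (P Q : Measure Ω)
    [IsProbabilityMeasure P] [IsProbabilityMeasure Q]
    {A : Set Ω} (hA : MeasurableSet A) :
    |(P A).toReal - (Q A).toReal| ≤ TV P Q := by
  have hbdd : BddAbove (Set.range fun A : {s : Set Ω // MeasurableSet s} =>
      |(P A.1).toReal - (Q A.1).toReal|) := by
    refine ⟨1, ?_⟩
    rintro _ ⟨B, rfl⟩
    have h1 : (P B.1).toReal ≤ 1 := by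
      have := ENNReal.toReal_mono (b := 1) ENNReal.one_ne_top (prob_le_one (μ := P) (s := B.1))
      simpa using this
    have h2 : (Q B.1).toReal ≤ 1 := by
      have := ENNReal.toReal_mono (b := 1) ENNReal.one_ne_top (prob_le_one (μ := Q) (s := B.1))
      simpa using this
    have h3 : 0 ≤ (P B.1).toReal := ENNReal.toReal_nonneg
    have h4 : 0 ≤ (Q B.1).toReal := ENNReal.toReal_nonneg
    rw [abs_sub_le_iff]
    constructor <;> linarith
  exact le_ciSup hbdd ⟨A, hA⟩

theorem stmt_18 {X Y : Type*} [MeasurableSpace X] [MeasurableSpace Y]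
    (D : Measure X) [IsProbabilityMeasure D]
    (κ₀ κ₁ : Kernel X Y) [IsMarkovKernel κ₀] [IsMarkovKernel κ₁]
    (c : ℝ) (hc0 : 0 < c) (hc1 : c ≤ 1)
    (ε : ℝ) (hε : 0 ≤ ε)
    (S : Set X) (hS : MeasurableSet S) (hSmass : D S ≤ ENNReal.ofReal ε)
    (hagree : ∀ x ∉ S, κ₀ x = κ₁ x)
    (hpartial : ∀ x ∈ S, TV (κ₀ x) (κ₁ x) ≤ c) :
    TV (D.bind (fun x => κ₀ x)) (D.bind (fun x => κ₁ x)) ≤ c * ε := by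
  rw [TV]
  refine ciSup_le fun A => ?_
  set f : X → ℝ := fun x => (κ₀ x A.1).toReal with hf_def
  set g : X → ℝ := fun x => (κ₁ x A.1).toReal with hg_def
  have hf_meas : Measurable f := (κ₀.measurable_coe A.2).ennreal_toReal
  have hg_meas : Measurable g := (κ₁.measurable_coe A.2).ennreal_toReal
  have hf_bd : ∀ x, ‖f x‖ ≤ 1 := fun x => by
    rw [Real.norm_eq_abs, abs_of_nonneg ENNReal.toReal_nonneg]
    have := ENNReal.toReal_mono (b := 1) ENNReal.one_ne_top
      (prob_le_one (μ := κ₀ x) (s := A.1))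
    simpa using this
  have hg_bd : ∀ x, ‖g x‖ ≤ 1 := fun x => by
    rw [Real.norm_eq_abs, abs_of_nonneg ENNReal.toReal_nonneg]
    have := ENNReal.toReal_mono (b := 1) ENNReal.one_ne_top
      (prob_le_one (μ := κ₁ x) (s := A.1))
    simpa using this
  have hf_int : Integrable f D :=
    Integrable.mono' (integrable_const 1) hf_meas.aestronglyMeasurable
      (Filter.Eventually.of_forall hf_bd)
  have hg_int : Integrable g D :=
    Integrable.mono' (integrable_const 1) hg_meas.aestronglyMeasurable
      (Filter.Eventually.of_forall hg_bd)
  have h0 : (D.bind (fun x => κ₀ x) A.1).toReal = ∫ x, f x ∂D := by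
    rw [Measure.bind_apply A.2 (Kernel.measurable κ₀).aemeasurable]
    rw [← integral_toReal ((κ₀.measurable_coe A.2).aemeasurable)
      (Filter.Eventually.of_forall fun x => measure_lt_top _ _)]
  have h1 : (D.bind (fun x => κ₁ x) A.1).toReal = ∫ x, g x ∂D := by
    rw [Measure.bind_apply A.2 (Kernel.measurable κ₁).aemeasurable]
    rw [← integral_toReal ((κ₁.measurable_coe A.2).aemeasurable)
      (Filter.Eventually.of_forall fun x => measure_lt_top _ _)]
  rw [h0, h1, ← integral_sub hf_int hg_int]
  have hsplit : ∫ x, (f x - g x) ∂D = ∫ x in S, (f x - g x) ∂D := by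
    have hint : Integrable (fun x => f x - g x) D := hf_int.sub hg_int
    rw [← integral_add_compl hS hint]
    have : ∫ x in Sᶜ, (f x - g x) ∂D = 0 := by
      rw [setIntegral_congr_fun hS.compl (g := fun _ => (0:ℝ))
        (fun x hx => by simp [hf_def, hg_def, hagree x hx])]
      simp
    rw [this, add_zero]
  rw [hsplit]
  have hbound : ‖∫ x in S, (f x - g x) ∂D‖ ≤ c * (D S).toReal := by
    refine norm_setIntegral_le_of_norm_le_const (measure_lt_top _ _) ?_
    · intro x hx
      rw [Real.norm_eq_abs]
      calc |f x - g x| ≤ TV (κ₀ x) (κ₁ x) := tv_ge _ _ A.2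
        _ ≤ c := hpartial x hx
  have hDS : (D S).toReal ≤ ε := by
    have := ENNReal.toReal_mono ENNReal.ofReal_ne_top hSmass
    rwa [ENNReal.toReal_ofReal hε] at this
  calc |∫ x in S, (f x - g x) ∂D| ≤ c * (D S).toReal := by
        rw [← Real.norm_eq_abs]; exact hbound
    _ ≤ c * ε := by nlinarith
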